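/- Every vertex of a nonempty compact polyhedron P = {θ ∈ ℝ^d : Σ_i α_{i,k} θ_i ≤ B_k, k = 1,...,m} is an extreme point of P, and if P is compact with more than one point and {P_θ : θ ∈ P} are pairwise mutually absolutely continuous probability measures, then no unbiased estimator with range in P exists. -/

import Mathlib

open MeasureTheory

theorem polyhedron_vertices_extreme_and_no_unbiased {d m : ℕ} {X : Type*} [MeasurableSpace X]
    (α : Fin m → Fin d → ℝ) (B : Fin m → ℝ) :
    (∀ v ∈ {θ : Fin d → ℝ | ∀ k, ∑ i, α k i * θ i ≤ B k},
      (∃ c : Fin d → ℝ, ∀ y ∈ {θ : Fin d → ℝ | ∀ k, ∑ i, α k i * θ i ≤ B k},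
        y ≠ v → ∑ i, c i * y i < ∑ i, c i * v i) →
      v ∈ Set.extremePoints ℝ {θ : Fin d → ℝ | ∀ k, ∑ i, α k i * θ i ≤ B k}) ∧
    (IsCompact {θ : Fin d → ℝ | ∀ k, ∑ i, α k i * θ i ≤ B k} →
     (∃ a ∈ {θ : Fin d → ℝ | ∀ k, ∑ i, α k i * θ i ≤ B k},
       ∃ b ∈ {θ : Fin d → ℝ | ∀ k, ∑ i, α k i * θ i ≤ B k}, a ≠ b) →
     ∀ P : (Fin d → ℝ) → Measure X,
      (∀ θ ∈ {θ : Fin d → ℝ | ∀ k, ∑ i, α k i * θ i ≤ B k}, IsProbabilityMeasure (P θ)) →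
      (∀ θ ∈ {θ : Fin d → ℝ | ∀ k, ∑ i, α k i * θ i ≤ B k},
        ∀ θ'' ∈ {θ : Fin d → ℝ | ∀ k, ∑ i, α k i * θ i ≤ B k}, P θ ≪ P θ'') →
      ¬ ∃ g : X → (Fin d → ℝ), Measurable g ∧
        (∀ x, g x ∈ {θ : Fin d → ℝ | ∀ k, ∑ i, α k i * θ i ≤ B k}) ∧
        (∀ θ ∈ {θ : Fin d → ℝ | ∀ k, ∑ i, α k i * θ i ≤ B k}, Integrable g (P θ)) ∧
        (∀ θ ∈ {θ : Fin d → ℝ | ∀ k, ∑ i, α k i * θ i ≤ B k}, ∫ x, g x ∂(P θ) = θ)) := by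
  constructor
  · rintro v hv ⟨c, hc⟩
    refine ⟨hv, ?_⟩
    rintro x hx y hy ⟨a, b, ha, hb, hab, hxy⟩
    by_cases hxv : x = v
    · subst hxv
      rfl
    · exfalso
      have h1 : ∑ i, c i * x i < ∑ i, c i * v i := hc x hx hxv
      have h2 : ∑ i, c i * y i ≤ ∑ i, c i * v i := by
        by_cases hyv : y = v
        · simp [hyv]
        · exact (hc y hy hyv).le
      have h3 : ∑ i, c i * v i =
          a * (∑ i, c i * x i) + b * (∑ i, c i * y i) := by
        rw [← hxy]
        rw [Finset.mul_sum, Finset.mul_sum, ← Finset.sum_add_distrib]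
        refine Finset.sum_congr rfl fun i _ => ?_
        simp only [Pi.add_apply, Pi.smul_apply, smul_eq_mul]
        ring
      have h4 : a * (∑ i, c i * v i) + b * (∑ i, c i * v i) = ∑ i, c i * v i := by
        rw [← add_mul, hab, one_mul]
      nlinarith [mul_lt_mul_of_pos_left h1 ha, mul_le_mul_of_nonneg_left h2 hb.le]
  · rintro hcomp ⟨a, haS, b, hbS, hab⟩ P hprob hac ⟨g, hgm, hgS, hgint, hgmean⟩
    set c : Fin d → ℝ := fun i => a i - b i with hc
    let Llin : (Fin d → ℝ) →ₗ[ℝ] ℝ :=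
      { toFun := fun θ => ∑ i, c i * θ i
        map_add' := by
          intro x y
          simp only [Pi.add_apply, mul_add]
          exact Finset.sum_add_distrib
        map_smul' := by
          intro r x
          simp only [Pi.smul_apply, smul_eq_mul, RingHom.id_apply, Finset.mul_sum]
          exact Finset.sum_congr rfl fun i _ => by ring }
    let L : (Fin d → ℝ) →L[ℝ] ℝ := LinearMap.toContinuousLinearMap Llin
    have hL : ∀ θ, L θ = ∑ i, c i * θ i := fun θ => rfl
    obtain ⟨v, hvS, hvmax⟩ :=
      hcomp.exists_isMaxOn ⟨a, haS⟩ (L.continuous.continuousOn)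
    have hba : L b < L a := by
      have hpos : 0 < ∑ i, (a i - b i) ^ 2 := by
        obtain ⟨i, hi⟩ := Function.ne_iff.mp hab
        refine Finset.sum_pos' (fun j _ => sq_nonneg _) ⟨i, Finset.mem_univ i, ?_⟩
        exact pow_two_pos_of_ne_zero (sub_ne_zero.mpr hi)
      have : L a - L b = ∑ i, (a i - b i) ^ 2 := by
        rw [hL, hL, ← Finset.sum_sub_distrib]
        exact Finset.sum_congr rfl fun i _ => by simp [hc]; ring
      linarith
    have hbv : L b < L v := lt_of_lt_of_le hba (hvmax haS)
    haveI := hprob v hvS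
    haveI := hprob b hbS
    have hintv : Integrable (fun x => L (g x)) (P v) := L.integrable_comp (hgint v hvS)
    have hmeanv : ∫ x, L (g x) ∂(P v) = L v := by
      rw [L.integral_comp_comm (hgint v hvS), hgmean v hvS]
    have hub : ∀ x, L (g x) ≤ L v := fun x => hvmax (hgS x)
    have hae : (fun x => L v - L (g x)) =ᵐ[P v] 0 := by
      rw [← integral_eq_zero_iff_of_nonneg (fun x => sub_nonneg.mpr (hub x))
        ((integrable_const (L v)).sub hintv)]
      rw [integral_sub (integrable_const _) hintv, hmeanv, integral_const]
      simp
    have hae' : (fun x => L (g x)) =ᵐ[P v] fun _ => L v := by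
      filter_upwards [hae] with x hx
      have : L v - L (g x) = 0 := hx
      linarith
    have hae2 : (fun x => L (g x)) =ᵐ[P b] fun _ => L v :=
      hae'.filter_mono ((hac b hbS v hvS).ae_le)
    have hmeanb : ∫ x, L (g x) ∂(P b) = L b := by
      rw [L.integral_comp_comm (hgint b hbS), hgmean b hbS]
    have : L b = L v := by
      rw [← hmeanb, integral_congr_ae hae2, integral_const]
      simp
    linarith
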